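/- Let k ≥ 2 be an integer, α the unique real root in (1,2) of Ψ_k(x) = x^k − x^{k−1} − ⋯ − x − 1, and g := (α − 1)/(2 + (k + 1)(α − 2)). Then for all positive integers m, n, x, one has g·α^{n−1} ≠ (F_{m+1}^{(k)})^x. -/

import Mathlib

open Polynomial

/-- Positivity of the k-generalized Fibonacci numbers. -/
lemma kFib_aux_pos (k : ℕ) (hk : 2 ≤ k) (F : ℤ → ℤ)
    (hF0 : ∀ i : ℤ, 2 - (k : ℤ) ≤ i → i ≤ 0 → F i = 0)
    (hF1 : F 1 = 1)
    (hFrec : ∀ i : ℤ, 2 ≤ i → F i = ∑ j ∈ Finset.Icc (1 : ℤ) (k : ℤ), F (i - j)) :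
    ∀ i : ℤ, 2 - (k : ℤ) ≤ i → (0 ≤ F i ∧ (1 ≤ i → 1 ≤ F i)) := by
  have main : ∀ M : ℕ, ∀ i : ℤ, 2 - (k : ℤ) ≤ i → i < 2 - (k : ℤ) + M →
      (0 ≤ F i ∧ (1 ≤ i → 1 ≤ F i)) := by
    intro M
    induction M with
    | zero => intro i h1 h2; omega
    | succ M ih =>
      intro i h1 h2
      rcases le_or_gt i 0 with hi0 | hi0
      · rw [hF0 i h1 hi0]; exact ⟨le_refl 0, by omega⟩
      rcases lt_or_ge i 2 with hi1 | hi2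
      · have hieq : i = 1 := by omega
        subst hieq
        rw [hF1]; exact ⟨by norm_num, fun _ => le_refl 1⟩
      have hM : 1 ≤ M := by
        by_contra hM
        have : M = 0 := by omega
        omega
      have hterm : ∀ j ∈ Finset.Icc (1 : ℤ) (k : ℤ), 0 ≤ F (i - j) := by
        intro j hj
        rw [Finset.mem_Icc] at hj
        exact (ih (i - j) (by omega) (by omega)).1
      rw [hFrec i hi2]
      constructor
      · exact Finset.sum_nonneg hterm
      · intro _
        have h1mem : (1 : ℤ) ∈ Finset.Icc (1 : ℤ) (k : ℤ) := by
          rw [Finset.mem_Icc]; omega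
        have hF1le : 1 ≤ F (i - 1) :=
          (ih (i - 1) (by omega) (by omega)).2 (by omega)
        calc (1 : ℤ) ≤ F (i - 1) := hF1le
          _ ≤ ∑ j ∈ Finset.Icc (1 : ℤ) (k : ℤ), F (i - j) :=
            Finset.single_le_sum hterm h1mem
  intro i h1
  exact main (i - (2 - (k : ℤ)) + 1).toNat i h1 (by omega)

lemma kFib_aux_one_le_prod (s : Multiset ℝ) (h : ∀ y ∈ s, 1 ≤ y) : 1 ≤ s.prod := by
  induction s using Multiset.induction_on with
  | empty => simp
  | cons a t ih =>
    rw [Multiset.prod_cons]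
    have ha : 1 ≤ a := h a (Multiset.mem_cons_self a t)
    have ht : 1 ≤ t.prod := ih fun y hy => h y (Multiset.mem_cons_of_mem hy)
    nlinarith

set_option maxHeartbeats 1000000 in
/-- With `α` the dominant root and `g = (α−1)/(2+(k+1)(α−2))`, for all positive integers
`m, n, x` one has `g·α^{n−1} ≠ (F_{m+1}^{(k)})^x`. -/
theorem kFib_linear_form_nonzero
    (k : ℕ) (hk : 2 ≤ k)
    (F : ℤ → ℤ)
    (hF0 : ∀ i : ℤ, 2 - (k : ℤ) ≤ i → i ≤ 0 → F i = 0)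
    (hF1 : F 1 = 1)
    (hFrec : ∀ i : ℤ, 2 ≤ i → F i = ∑ j ∈ Finset.Icc (1 : ℤ) (k : ℤ), F (i - j))
    (α : ℝ) (hα1 : 1 < α) (hα2 : α < 2)
    (hroot : α ^ k = ∑ i ∈ Finset.range k, α ^ i)
    (g : ℝ) (hg : g = (α - 1) / (2 + ((k : ℝ) + 1) * (α - 2)))
    (m : ℤ) (hm : 0 < m) (n x : ℕ) (hn : 1 ≤ n) (hx : 1 ≤ x) :
    g * α ^ (n - 1) ≠ ((F (m + 1) : ℝ)) ^ x := by
  intro h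
  -- N is a positive integer
  have hFm : 1 ≤ F (m + 1) :=
    (kFib_aux_pos k hk F hF0 hF1 hFrec (m + 1) (by omega)).2 (by omega)
  set N : ℤ := F (m + 1) ^ x with hNdef
  have hN : 1 ≤ N := by
    have := pow_le_pow_left₀ (by norm_num : (0:ℤ) ≤ 1) hFm x
    simpa using this
  have hNR : (1 : ℝ) ≤ (N : ℝ) := by exact_mod_cast hN
  have hR : ((F (m + 1) : ℝ)) ^ x = (N : ℝ) := by push_cast [hNdef]; ring
  rw [hR] at h
  -- the key real polynomial identity
  by_cases hD : (2 + ((k : ℝ) + 1) * (α - 2)) = 0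
  · rw [hg, hD, div_zero, zero_mul] at h
    have : (N : ℝ) ≥ 1 := hNR
    linarith [h]
  have key : (α - 1) * α ^ (n - 1) = (N : ℝ) * (((k : ℝ) + 1) * α - 2 * (k : ℝ)) := by
    rw [hg] at h
    field_simp at h
    nlinarith [h]
  -- α is a root of the monic integer polynomial X^(k+1) - 2X^k + 1
  have hgeo : (∑ i ∈ Finset.range k, α ^ i) * (α - 1) = α ^ k - 1 := geom_sum_mul α k
  have hPreal : α ^ (k + 1) - 2 * α ^ k + 1 = 0 := by
    linear_combination (α - 1) * hroot + hgeo
  set z : ℂ := (α : ℂ) with hzdef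
  have hzabs : ‖z‖ = α := by
    rw [hzdef, Complex.norm_real, Real.norm_eq_abs, abs_of_pos (by linarith)]
  have hPz : z ^ (k + 1) - 2 * z ^ k + 1 = 0 := by
    rw [hzdef]
    exact_mod_cast congrArg (fun t : ℝ => (t : ℂ)) hPreal
  set PP : ℤ[X] := X ^ (k + 1) - (C 2 * X ^ k - 1) with hPPdef
  have hPPmonic : PP.Monic := by
    apply monic_X_pow_sub
    apply lt_of_le_of_lt (degree_sub_le _ _)
    rw [max_lt_iff]
    constructor
    · calc (C (2:ℤ) * X ^ k).degree ≤ (C (2:ℤ)).degree + (X ^ k : ℤ[X]).degree :=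
            degree_mul_le _ _
        _ ≤ 0 + (k : ℕ) := by
            exact add_le_add degree_C_le (degree_X_pow_le _)
        _ < (k + 1 : ℕ) := by
            rw [zero_add]
            exact_mod_cast WithBot.coe_lt_coe.mpr (Nat.lt_succ_self k)
    · exact lt_of_le_of_lt degree_one_le (by exact_mod_cast Nat.succ_pos k)
  have hPPaeval : aeval z PP = 0 := by
    rw [hPPdef]
    simp only [map_sub, map_mul, map_pow, map_one, aeval_X, aeval_C, algebraMap_int_eq,
      eq_intCast, map_ofNat, map_intCast, map_natCast]
    push_cast
    linear_combination hPz
  have hint : IsIntegral ℤ z := ⟨PP, hPPmonic, by rw [← aeval_def]; exact hPPaeval⟩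
  set μ : ℤ[X] := minpoly ℤ z with hμdef
  have hμmonic : μ.Monic := minpoly.monic hint
  set μ' : ℂ[X] := μ.map (algebraMap ℤ ℂ) with hμ'def
  have hμ'monic : μ'.Monic := hμmonic.map _
  have hμ'ne : μ' ≠ 0 := hμ'monic.ne_zero
  -- constant coefficient of μ is ±1
  have hdvdPP : μ ∣ PP := minpoly.isIntegrallyClosed_dvd hint hPPaeval
  have hcoeff : μ.coeff 0 = 1 ∨ μ.coeff 0 = -1 := by
    obtain ⟨q, hq⟩ := hdvdPP
    have hPP0 : PP.coeff 0 = 1 := by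
      rw [hPPdef]
      simp [coeff_X_pow, coeff_one, show (0 : ℕ) ≠ k + 1 by omega, show (0 : ℕ) ≠ k by omega]
    have : μ.coeff 0 * q.coeff 0 = 1 := by
      rw [← mul_coeff_zero, ← hq, hPP0]
    exact Int.eq_one_or_neg_one_of_mul_eq_one' this |>.imp (fun h => h.1) (fun h => h.1)
  have habsc : |(μ.coeff 0 : ℝ)| = 1 := by
    rcases hcoeff with h' | h' <;> rw [h'] <;> norm_num
  -- roots of μ'
  have hsplits : μ'.Splits := IsAlgClosed.splits μ'
  have hzroot : aeval z μ = 0 := minpoly.aeval ℤ z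
  have hzmem : z ∈ μ'.roots := by
    rw [mem_roots hμ'ne]
    rw [IsRoot, eval_map, ← aeval_def]
    exact hzroot
  have hprod : μ'.coeff 0 = (-1) ^ μ'.natDegree * μ'.roots.prod :=
    hsplits.coeff_zero_eq_prod_roots_of_monic hμ'monic
  have habsprod : ‖μ'.roots.prod‖ = 1 := by
    have h1 : ‖μ'.coeff 0‖ = 1 := by
      rw [hμ'def, coeff_map]
      have : (algebraMap ℤ ℂ) (μ.coeff 0) = ((μ.coeff 0 : ℝ) : ℂ) := by
        simp only [algebraMap_int_eq, eq_intCast]; norm_cast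
      rw [this, Complex.norm_real, Real.norm_eq_abs, habsc]
    rw [hprod] at h1
    rw [norm_mul, norm_pow] at h1
    simpa using h1
  set rest : Multiset ℂ := μ'.roots.erase z with hrestdef
  have hcons : z ::ₘ rest = μ'.roots := Multiset.cons_erase hzmem
  have hrestprod : ‖rest.prod‖ = 1 / α := by
    have : μ'.roots.prod = z * rest.prod := by rw [← hcons, Multiset.prod_cons]
    rw [this, norm_mul, hzabs] at habsprod
    field_simp
    linarith [habsprod]
  -- there is a conjugate root β with |β| < 1
  have hexists : ∃ β ∈ rest, ‖β‖ < 1 := by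
    by_contra hcon
    push_neg at hcon
    have h1 : (1 : ℝ) ≤ (rest.map (fun w : ℂ => ‖w‖)).prod :=
      kFib_aux_one_le_prod _ (by
        intro r hr
        obtain ⟨β, hβ, rfl⟩ := Multiset.mem_map.mp hr
        exact hcon β hβ)
    have h2 : ‖rest.prod‖ = (rest.map (fun w : ℂ => ‖w‖)).prod :=
      map_multiset_prod normHom rest
    rw [hrestprod] at h2
    have : 1 / α < 1 := by
      rw [div_lt_one (by linarith)]; linarith
    linarith [h2 ▸ h1]
  obtain ⟨β, hβrest, hβabs⟩ := hexists
  have hβroot : aeval β μ = 0 := by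
    have hβmem : β ∈ μ'.roots := Multiset.mem_of_mem_erase hβrest
    rw [mem_roots hμ'ne] at hβmem
    rw [IsRoot, eval_map, ← aeval_def] at hβmem
    exact hβmem
  -- β is a root of Ψ and of Q
  have transfer : ∀ p : ℤ[X], aeval z p = 0 → aeval β p = 0 := by
    intro p hp
    obtain ⟨q, hq⟩ := minpoly.isIntegrallyClosed_dvd hint hp
    rw [hq, map_mul, hβroot, zero_mul]
  -- Ψ
  have hΨz : aeval z (X ^ k - ∑ i ∈ Finset.range k, X ^ i : ℤ[X]) = 0 := by
    simp only [map_sub, map_sum, map_pow, aeval_X]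
    have : (α : ℂ) ^ k = ∑ i ∈ Finset.range k, (α : ℂ) ^ i := by
      exact_mod_cast congrArg (fun t : ℝ => (t : ℂ)) hroot
    rw [hzdef, this, sub_self]
  have hβΨ : β ^ k = ∑ i ∈ Finset.range k, β ^ i := by
    have := transfer _ hΨz
    simp only [map_sub, map_sum, map_pow, aeval_X] at this
    exact sub_eq_zero.mp this
  -- Q
  have hQz : aeval z ((X - 1) * X ^ (n - 1)
      - C N * (C ((k : ℤ) + 1) * X - C (2 * (k : ℤ))) : ℤ[X]) = 0 := by
    simp only [map_sub, map_mul, map_pow, map_one, aeval_X, aeval_C, algebraMap_int_eq,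
      eq_intCast, map_ofNat, map_intCast, map_natCast]
    push_cast
    have keyC : ((α : ℂ) - 1) * (α : ℂ) ^ (n - 1)
        = (N : ℂ) * (((k : ℂ) + 1) * (α : ℂ) - 2 * (k : ℂ)) := by
      exact_mod_cast congrArg (fun t : ℝ => (t : ℂ)) key
    rw [hzdef]
    linear_combination keyC
  have hβQ : (β - 1) * β ^ (n - 1) = (N : ℂ) * (((k : ℂ) + 1) * β - 2 * (k : ℂ)) := by
    have := transfer _ hQz
    simp only [map_sub, map_mul, map_pow, map_one, aeval_X, aeval_C, algebraMap_int_eq,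
      eq_intCast, map_ofNat, map_intCast, map_natCast] at this
    push_cast at this
    linear_combination this
  -- size estimates
  set b : ℝ := ‖β‖ with hbdef
  have hb0 : 0 ≤ b := norm_nonneg β
  have hb1 : b < 1 := hβabs
  have hbpow : b ^ (n - 1) ≤ 1 := pow_le_one₀ hb0 hb1.le
  have hbpow0 : 0 ≤ b ^ (n - 1) := pow_nonneg hb0 _
  have hEq : ‖β - 1‖ * b ^ (n - 1)
      = (N : ℝ) * ‖((k : ℂ) + 1) * β - 2 * (k : ℂ)‖ := by
    have := congrArg Norm.norm hβQ
    rw [norm_mul, norm_mul, norm_pow] at this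
    rw [hbdef]
    convert this using 2
    rw [Complex.norm_intCast]
    exact_mod_cast (abs_of_pos (by exact_mod_cast hN : (0:ℝ) < (N:ℝ))).symm
  have hLle : ‖β - 1‖ ≤ b + 1 := by
    have := norm_sub_le β 1
    simpa [hbdef] using this
  have hRge : 2 * (k : ℝ) - ((k : ℝ) + 1) * b
      ≤ ‖((k : ℂ) + 1) * β - 2 * (k : ℂ)‖ := by
    have h1 : ‖2 * (k : ℂ)‖ - ‖((k : ℂ) + 1) * β‖
        ≤ ‖2 * (k : ℂ) - ((k : ℂ) + 1) * β‖ :=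
      norm_sub_norm_le _ _
    have h2 : ‖2 * (k : ℂ)‖ = 2 * (k : ℝ) := by
      rw [norm_mul]
      simp [Complex.norm_natCast]
    have h3 : ‖((k : ℂ) + 1) * β‖ = ((k : ℝ) + 1) * b := by
      rw [norm_mul, hbdef]
      congr 1
      have : ((k : ℂ) + 1) = (((k : ℝ) + 1 : ℝ) : ℂ) := by push_cast; ring
      rw [this, Complex.norm_real, Real.norm_eq_abs, abs_of_pos (by positivity)]
    have h4 : ‖2 * (k : ℂ) - ((k : ℂ) + 1) * β‖
        = ‖((k : ℂ) + 1) * β - 2 * (k : ℂ)‖ := norm_sub_rev _ _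
    rw [h2, h3, h4] at h1
    exact h1
  have habsβ1 : 0 ≤ ‖β - 1‖ := norm_nonneg _
  rcases eq_or_lt_of_le hk with hk2 | hk3
  · -- k = 2 : identify β explicitly
    have hk2' : k = 2 := hk2.symm
    subst hk2'
    have hβq : β ^ 2 = 1 + β := by
      rw [hβΨ]; simp [Finset.sum_range_succ]
    have hαq : z ^ 2 = 1 + z := by
      have : (α : ℂ) ^ 2 = ∑ i ∈ Finset.range 2, (α : ℂ) ^ i := by
        exact_mod_cast congrArg (fun t : ℝ => (t : ℂ)) hroot
      rw [hzdef, this]; simp [Finset.sum_range_succ]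
    have hfact : (β - (1 - z)) * (β - z) = 0 := by
      linear_combination hβq - hαq
    have hβval : β = 1 - z := by
      rcases mul_eq_zero.mp hfact with h' | h'
      · exact sub_eq_zero.mp h'
      · exfalso
        have hβz : β = z := sub_eq_zero.mp h'
        have hbα : b = α := by rw [hbdef, hβz, hzabs]
        linarith
    have hβre : β = ((1 - α : ℝ) : ℂ) := by rw [hβval, hzdef]; push_cast; ring
    have hbval : b = α - 1 := by
      rw [hbdef, hβre, Complex.norm_real, Real.norm_eq_abs, abs_of_neg (by linarith)]; ring
    have habsβm1 : ‖β - 1‖ = α := by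
      have : β - 1 = ((-α : ℝ) : ℂ) := by rw [hβre]; push_cast; ring
      rw [this, Complex.norm_real, Real.norm_eq_abs, abs_of_neg (by linarith)]; ring
    have habsRHS : ‖(((2 : ℕ) : ℂ) + 1) * β - 2 * ((2 : ℕ) : ℂ)‖ = 1 + 3 * α := by
      have hrw : (((2 : ℕ) : ℂ) + 1) * β - 2 * ((2 : ℕ) : ℂ) = ((-(1 + 3 * α) : ℝ) : ℂ) := by
        rw [hβre]; push_cast; ring
      rw [hrw, Complex.norm_real, Real.norm_eq_abs, abs_of_neg (by linarith)]; ring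
    rw [habsβm1, habsRHS] at hEq
    have hLle2 : α * b ^ (n - 1) ≤ α := by
      have := mul_le_mul_of_nonneg_left hbpow (by linarith : (0 : ℝ) ≤ α)
      linarith [this]
    have h7 : (1 : ℝ) * (1 + 3 * α) ≤ (N : ℝ) * (1 + 3 * α) :=
      mul_le_mul_of_nonneg_right hNR (by linarith)
    linarith [hEq, hLle2, h7]
  · -- k ≥ 3
    have hk3' : (3 : ℝ) ≤ (k : ℝ) := by exact_mod_cast hk3
    have hL : ‖β - 1‖ * b ^ (n - 1) < 2 := by
      calc ‖β - 1‖ * b ^ (n - 1) ≤ (b + 1) * 1 := by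
            apply mul_le_mul hLle hbpow hbpow0 (by linarith)
        _ < 2 := by linarith
    have hR2 : (2 : ℝ) < (N : ℝ) * ‖((k : ℂ) + 1) * β - 2 * (k : ℂ)‖ := by
      have h5 : (2 : ℝ) < 2 * (k : ℝ) - ((k : ℝ) + 1) * b := by nlinarith
      have h6 : (2 : ℝ) < ‖((k : ℂ) + 1) * β - 2 * (k : ℂ)‖ :=
        lt_of_lt_of_le h5 hRge
      have hA0 : (0 : ℝ) ≤ ‖((k : ℂ) + 1) * β - 2 * (k : ℂ)‖ :=
        norm_nonneg _
      have := mul_le_mul_of_nonneg_right hNR hA0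
      linarith [h6, this]
    linarith [hEq, hL, hR2]
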